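/- Let (J, u, ω, h, P) be a classical solution of the planar non-resistive MHD system in Lagrangian coordinates on ℝ × [0,T] with J > 0 and ρ₀ > 0 everywhere, ρ₀ differentiable, and let F := μ ∂_y ω / J + h/(4π). Assume there is E₀ ≥ 0 with ∫_ℝ ρ₀(y) u(y,t)² dy ≤ 2E₀ for all t. Fix t ∈ [0,T] and assume at time t: J|F|², |∂_y F|²/ρ₀, ρ₀ u² , |∂_y ω|²/J are integrable on ℝ; F(·,t) is bounded; the map s ↦ ∫_ℝ J(y,s)|F(y,s)|² dy is differentiable at t with derivative ∫_ℝ ( ∂_t J |F|² + 2 J F·∂_t F ) dy; and the integration by parts identities ∫_ℝ ( ∂_t J |F|² + 2 J F·∂_t F ) dy + 2μ ∫_ℝ |∂_y F|²/ρ₀ dy = 2∫_ℝ u F·∂_y F dy + (1/(2π)) ∫_ℝ ∂_y ω·F dy hold (as is valid when the relevant fluxes vanish at y = ±∞). Then: (d/dt) ∫_ℝ J|F|² dy + 2μ ∫_ℝ |∂_y F|²/ρ₀ dy ≤ 2√(2E₀) ( ∫_ℝ |∂_y F|²/ρ₀ dy )^{1/2} ‖F(·,t)‖_∞ + (1/(2π))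 ( ∫_ℝ |∂_y ω|²/J dy )^{1/2} ( ∫_ℝ J|F|² dy )^{1/2}. -/

import Mathlib

open Real MeasureTheory
open scoped InnerProductSpace

noncomputable section

/-- The plane `ℝ²` as a Euclidean space, target of the transverse velocity and
magnetic field. -/
abbrev E2 := EuclideanSpace ℝ (Fin 2)

/-- Partial derivative in time of a scalar field `f = f(y, t)`. -/
def pdt (f : ℝ → ℝ → ℝ) (y t : ℝ) : ℝ := deriv (fun s => f y s) t

/-- Partial derivative in space of a scalar field `f = f(y, t)`. -/
def pdy (f : ℝ → ℝ → ℝ) (y t : ℝ) : ℝ := deriv (fun z => f z t) y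

/-- Partial derivative in time of an `ℝ²`-valued field. -/
def pdtV (f : ℝ → ℝ → E2) (y t : ℝ) : E2 := deriv (fun s => f y s) t

/-- Partial derivative in space of an `ℝ²`-valued field. -/
def pdyV (f : ℝ → ℝ → E2) (y t : ℝ) : E2 := deriv (fun z => f z t) y

/-- `(J, u, ω, h, P)` is a classical solution of the planar non-resistive MHD system in
Lagrangian coordinates, for times in the set `S`: all the unknowns are twice continuously
differentiable (in particular all partial derivatives appearing in the system exist and
are continuous) and the five equations hold pointwise. -/
structure IsMHDSolution (lam mu gam : ℝ) (ρ₀ : ℝ → ℝ)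
    (J u P : ℝ → ℝ → ℝ) (ω h : ℝ → ℝ → E2) (S : Set ℝ) : Prop where
  smooth_J : ContDiffOn ℝ 2 (fun p : ℝ × ℝ => J p.1 p.2) (Set.univ ×ˢ S)
  smooth_u : ContDiffOn ℝ 2 (fun p : ℝ × ℝ => u p.1 p.2) (Set.univ ×ˢ S)
  smooth_P : ContDiffOn ℝ 2 (fun p : ℝ × ℝ => P p.1 p.2) (Set.univ ×ˢ S)
  smooth_ω : ContDiffOn ℝ 2 (fun p : ℝ × ℝ => ω p.1 p.2) (Set.univ ×ˢ S)
  smooth_h : ContDiffOn ℝ 2 (fun p : ℝ × ℝ => h p.1 p.2) (Set.univ ×ˢ S)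
  /-- (i) `∂ₜ J = ∂_y u` -/
  mass : ∀ y : ℝ, ∀ t ∈ S, pdt J y t = pdy u y t
  /-- (ii) `ρ₀ ∂ₜ u − λ ∂_y(∂_y u / J) + ∂_y P + (1/(4π)) h·∂_y h = 0` -/
  momentum : ∀ y : ℝ, ∀ t ∈ S,
    ρ₀ y * pdt u y t - lam * pdy (fun z s => pdy u z s / J z s) y t
      + pdy P y t + (1 / (4 * π)) * ⟪h y t, pdyV h y t⟫_ℝ = 0
  /-- (iii) `ρ₀ ∂ₜ ω − μ ∂_y(∂_y ω / J) = (1/(4π)) ∂_y h` -/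
  momentumT : ∀ y : ℝ, ∀ t ∈ S,
    ρ₀ y • pdtV ω y t - mu • pdyV (fun z s => (J z s)⁻¹ • pdyV ω z s) y t
      = (1 / (4 * π)) • pdyV h y t
  /-- (iv) `∂ₜ h + (∂_y u / J) h − ∂_y ω / J = 0` -/
  magnetic : ∀ y : ℝ, ∀ t ∈ S,
    pdtV h y t + (pdy u y t / J y t) • h y t - (J y t)⁻¹ • pdyV ω y t = 0
  /-- (v) `∂ₜ P + γ (∂_y u / J) P = (γ−1)(λ (∂_y u / J)² + μ |∂_y ω / J|²)` -/
  pressure : ∀ y : ℝ, ∀ t ∈ S,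
    pdt P y t + gam * (pdy u y t / J y t) * P y t
      = (gam - 1) * (lam * (pdy u y t / J y t) ^ 2 + mu * ‖(J y t)⁻¹ • pdyV ω y t‖ ^ 2)


/-- The effective viscous flux `G := λ ∂_y u / J − P − |h|²/(8π)`. -/
def Gflux (lam : ℝ) (J u P : ℝ → ℝ → ℝ) (h : ℝ → ℝ → E2) : ℝ → ℝ → ℝ := fun y t =>
  lam * pdy u y t / J y t - P y t - ‖h y t‖ ^ 2 / (8 * π)

/-- The transverse effective viscous flux `F := μ ∂_y ω / J + h/(4π)`. -/
def Fflux (mu : ℝ) (J : ℝ → ℝ → ℝ) (ω h : ℝ → ℝ → E2) : ℝ → ℝ → E2 := fun y t =>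
  mu • ((J y t)⁻¹ • pdyV ω y t) + (1 / (4 * π)) • h y t

/-- The squared magnetic field `H := |h|²`. -/
def Hfield (h : ℝ → ℝ → E2) : ℝ → ℝ → ℝ := fun y t => ‖h y t‖ ^ 2


private lemma cs_main (f g k : ℝ → ℝ)
    (hfm : AEStronglyMeasurable f) (hgm : AEStronglyMeasurable g)
    (hkm : AEStronglyMeasurable k)
    (hf2 : Integrable (fun y => f y ^ 2)) (hg2 : Integrable (fun y => g y ^ 2))
    (hle : ∀ y, |k y| ≤ |f y| * |g y|) :
    ∫ y : ℝ, k y ≤ Real.sqrt (∫ y : ℝ, f y ^ 2) * Real.sqrt (∫ y : ℝ, g y ^ 2) := by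
  have hbound : Integrable (fun y => (f y ^ 2 + g y ^ 2) / 2) := (hf2.add hg2).div_const 2
  have hfg_le : ∀ y, |f y| * |g y| ≤ (f y ^ 2 + g y ^ 2) / 2 := fun y => by
    nlinarith [sq_nonneg (|f y| - |g y|), sq_abs (f y), sq_abs (g y)]
  have hki : Integrable k :=
    hbound.mono' hkm (ae_of_all _ fun y => by
      simpa [Real.norm_eq_abs] using (hle y).trans (hfg_le y))
  have hfgm : AEStronglyMeasurable (fun y => |f y| * |g y|) := hfm.norm.mul hgm.norm
  have hfgi : Integrable (fun y => |f y| * |g y|) :=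
    hbound.mono' hfgm (ae_of_all _ fun y => by
      simpa [Real.norm_eq_abs, abs_of_nonneg (mul_nonneg (abs_nonneg (f y)) (abs_nonneg (g y)))]
        using hfg_le y)
  have hpq : Real.HolderConjugate 2 2 := Real.HolderConjugate.two_two
  have h2 : ENNReal.ofReal (2 : ℝ) = 2 := by norm_num
  have hfL : MemLp (fun y => |f y|) (ENNReal.ofReal 2) := by
    rw [h2]; exact ((memLp_two_iff_integrable_sq hfm).2 hf2).norm
  have hgL : MemLp (fun y => |g y|) (ENNReal.ofReal 2) := by
    rw [h2]; exact ((memLp_two_iff_integrable_sq hgm).2 hg2).norm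
  have hH := integral_mul_le_Lp_mul_Lq_of_nonneg hpq
    (ae_of_all _ fun y => abs_nonneg (f y)) (ae_of_all _ fun y => abs_nonneg (g y)) hfL hgL
  have e1 : (∫ y : ℝ, |f y| ^ (2 : ℝ)) = ∫ y : ℝ, f y ^ 2 := by
    simp_rw [Real.rpow_two, sq_abs]
  have e2 : (∫ y : ℝ, |g y| ^ (2 : ℝ)) = ∫ y : ℝ, g y ^ 2 := by
    simp_rw [Real.rpow_two, sq_abs]
  rw [e1, e2] at hH
  calc ∫ y : ℝ, k y ≤ ∫ y : ℝ, |k y| := integral_mono hki hki.abs fun y => le_abs_self _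
    _ ≤ ∫ y : ℝ, |f y| * |g y| := integral_mono hki.abs hfgi hle
    _ ≤ (∫ y : ℝ, f y ^ 2) ^ (1 / (2:ℝ)) * (∫ y : ℝ, g y ^ 2) ^ (1 / (2:ℝ)) := hH
    _ = _ := by rw [Real.sqrt_eq_rpow, Real.sqrt_eq_rpow]

/-- key differential inequality in the proof of Lemma 3.5 of the
paper: for a classical solution on `ℝ × [0,T]` with `J > 0`, `ρ₀ > 0`, `ρ₀`
differentiable, kinetic energy bound `∫ ρ₀ u² ≤ 2E₀`, and, at a fixed time `t`, the
stated integrability, boundedness, differentiation under the integral sign and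
integration-by-parts assumptions, the transverse effective viscous flux
`F = μ ∂_y ω / J + h/(4π)` satisfies
`(d/dt) ∫ J|F|² + 2μ ∫ |∂_y F|²/ρ₀
   ≤ 2√(2E₀) (∫ |∂_y F|²/ρ₀)^{1/2} ‖F(·,t)‖_∞
     + (1/(2π)) (∫ |∂_y ω|²/J)^{1/2} (∫ J|F|²)^{1/2}`. -/
theorem stmt_18 (T lam mu gam E₀ t : ℝ) (hT : 0 < T) (hlam : 0 < lam) (hmu : 0 < mu)
    (hgam : 1 < gam) (hE : 0 ≤ E₀)
    (ρ₀ : ℝ → ℝ) (hρpos : ∀ y : ℝ, 0 < ρ₀ y) (hρdiff : Differentiable ℝ ρ₀)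
    (J u P : ℝ → ℝ → ℝ) (ω h : ℝ → ℝ → E2)
    (hJpos : ∀ y : ℝ, ∀ s ∈ Set.Icc (0 : ℝ) T, 0 < J y s)
    (hsol : IsMHDSolution lam mu gam ρ₀ J u P ω h (Set.Icc 0 T))
    (huE : ∀ s ∈ Set.Icc (0 : ℝ) T, ∫ y : ℝ, ρ₀ y * (u y s) ^ 2 ≤ 2 * E₀)
    (ht : t ∈ Set.Icc (0 : ℝ) T)
    (hint1 : Integrable (fun y => J y t * ‖Fflux mu J ω h y t‖ ^ 2))
    (hint2 : Integrable (fun y => ‖pdyV (Fflux mu J ω h) y t‖ ^ 2 / ρ₀ y))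
    (hint3 : Integrable (fun y => ρ₀ y * (u y t) ^ 2))
    (hint4 : Integrable (fun y => ‖pdyV ω y t‖ ^ 2 / J y t))
    (hFbdd : BddAbove (Set.range fun y => ‖Fflux mu J ω h y t‖))
    (hderiv : HasDerivAt (fun s => ∫ y : ℝ, J y s * ‖Fflux mu J ω h y s‖ ^ 2)
      (∫ y : ℝ, (pdt J y t * ‖Fflux mu J ω h y t‖ ^ 2
        + 2 * J y t * ⟪Fflux mu J ω h y t, pdtV (Fflux mu J ω h) y t⟫_ℝ)) t)
    (hibp : (∫ y : ℝ, (pdt J y t * ‖Fflux mu J ω h y t‖ ^ 2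
          + 2 * J y t * ⟪Fflux mu J ω h y t, pdtV (Fflux mu J ω h) y t⟫_ℝ))
          + 2 * mu * ∫ y : ℝ, ‖pdyV (Fflux mu J ω h) y t‖ ^ 2 / ρ₀ y
        = 2 * (∫ y : ℝ, u y t * ⟪Fflux mu J ω h y t, pdyV (Fflux mu J ω h) y t⟫_ℝ)
          + (1 / (2 * π)) * ∫ y : ℝ, ⟪pdyV ω y t, Fflux mu J ω h y t⟫_ℝ) :
    deriv (fun s => ∫ y : ℝ, J y s * ‖Fflux mu J ω h y s‖ ^ 2) t
        + 2 * mu * ∫ y : ℝ, ‖pdyV (Fflux mu J ω h) y t‖ ^ 2 / ρ₀ y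
      ≤ 2 * Real.sqrt (2 * E₀)
            * Real.sqrt (∫ y : ℝ, ‖pdyV (Fflux mu J ω h) y t‖ ^ 2 / ρ₀ y)
            * (⨆ y : ℝ, ‖Fflux mu J ω h y t‖)
        + (1 / (2 * π)) * Real.sqrt (∫ y : ℝ, ‖pdyV ω y t‖ ^ 2 / J y t)
            * Real.sqrt (∫ y : ℝ, J y t * ‖Fflux mu J ω h y t‖ ^ 2) := by
  classical
  set F := Fflux mu J ω h with hF
  set G : ℝ → E2 := fun y => pdyV F y t with hG
  set M : ℝ := ⨆ y : ℝ, ‖F y t‖ with hMdef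
  have hMle : ∀ y : ℝ, ‖F y t‖ ≤ M := fun y => le_ciSup hFbdd y
  have hM0 : 0 ≤ M := le_trans (norm_nonneg _) (hMle 0)
  -- continuity of the time slices
  have hmap : Continuous fun y : ℝ => ((y, t) : ℝ × ℝ) := continuous_id.prodMk continuous_const
  have hmem : ∀ y : ℝ, ((y, t) : ℝ × ℝ) ∈ (Set.univ ×ˢ Set.Icc (0:ℝ) T) := fun y => ⟨trivial, ht⟩
  have hcJ : Continuous fun y => J y t :=
    hsol.smooth_J.continuousOn.comp_continuous hmap hmem
  have hcu : Continuous fun y => u y t :=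
    hsol.smooth_u.continuousOn.comp_continuous hmap hmem
  have hch : Continuous fun y => h y t :=
    hsol.smooth_h.continuousOn.comp_continuous hmap hmem
  have hcρ : Continuous ρ₀ := hρdiff.continuous
  have hcsρ : Continuous fun y => Real.sqrt (ρ₀ y) := Real.continuous_sqrt.comp hcρ
  have hcsJ : Continuous fun y => Real.sqrt (J y t) := Real.continuous_sqrt.comp hcJ
  -- measurability
  have hmω : Measurable fun y => pdyV ω y t := measurable_deriv (fun z => ω z t)
  have hmF : Measurable fun y => F y t := by
    show Measurable fun y => mu • ((J y t)⁻¹ • pdyV ω y t) + (1 / (4 * π)) • h y t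
    exact ((hcJ.measurable.inv.smul hmω).const_smul mu).add (hch.const_smul (1 / (4 * π))).measurable
  have hmG : Measurable G := measurable_deriv (fun z => F z t)
  have hρpos' : ∀ y : ℝ, 0 < Real.sqrt (ρ₀ y) := fun y => Real.sqrt_pos.2 (hρpos y)
  have hJpos' : ∀ y : ℝ, 0 < Real.sqrt (J y t) := fun y => Real.sqrt_pos.2 (hJpos y t ht)
  -- Term A : Cauchy–Schwarz for  ∫ u ⟪F, ∂_y F⟫
  have hA : (∫ y : ℝ, u y t * ⟪F y t, G y⟫_ℝ)
      ≤ Real.sqrt (2 * E₀) * (M * Real.sqrt (∫ y : ℝ, ‖G y‖ ^ 2 / ρ₀ y)) := by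
    have key := cs_main (fun y => Real.sqrt (ρ₀ y) * u y t)
      (fun y => M * (‖G y‖ / Real.sqrt (ρ₀ y)))
      (fun y => u y t * ⟪F y t, G y⟫_ℝ)
      ((hcsρ.mul hcu).aestronglyMeasurable)
      ((measurable_const.mul (hmG.norm.div hcsρ.measurable)).aestronglyMeasurable)
      ((hcu.measurable.mul (hmF.inner hmG)).aestronglyMeasurable)
      (hint3.congr (ae_of_all _ fun y => by
        simp [mul_pow, Real.sq_sqrt (hρpos y).le]))
      ((hint2.const_mul (M ^ 2)).congr (ae_of_all _ fun y => by
        simp [mul_pow, div_pow, Real.sq_sqrt (hρpos y).le]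
        exact Or.inl rfl))
      (fun y => by
        have h1 : |⟪F y t, G y⟫_ℝ| ≤ ‖F y t‖ * ‖G y‖ := abs_real_inner_le_norm _ _
        have h2 : ‖F y t‖ * ‖G y‖ ≤ M * ‖G y‖ :=
          mul_le_mul_of_nonneg_right (hMle y) (norm_nonneg _)
        have e : |Real.sqrt (ρ₀ y) * u y t| * |M * (‖G y‖ / Real.sqrt (ρ₀ y))|
            = |u y t| * (M * ‖G y‖) := by
          rw [abs_mul, abs_mul, abs_of_nonneg (Real.sqrt_nonneg (ρ₀ y)), abs_of_nonneg hM0,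
            abs_of_nonneg (div_nonneg (norm_nonneg _) (Real.sqrt_nonneg _))]
          field_simp [(Real.sqrt_pos.2 (hρpos y)).ne']
        rw [e, abs_mul]
        exact mul_le_mul_of_nonneg_left (h1.trans h2) (abs_nonneg _))
    have ea : (∫ y : ℝ, (Real.sqrt (ρ₀ y) * u y t) ^ 2) = ∫ y : ℝ, ρ₀ y * u y t ^ 2 :=
      integral_congr_ae (ae_of_all _ fun y => by simp [mul_pow, Real.sq_sqrt (hρpos y).le])
    have eb : (∫ y : ℝ, (M * (‖G y‖ / Real.sqrt (ρ₀ y))) ^ 2)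
        = M ^ 2 * ∫ y : ℝ, ‖G y‖ ^ 2 / ρ₀ y := by
      rw [← integral_const_mul]
      exact integral_congr_ae (ae_of_all _ fun y => by
        simp [mul_pow, div_pow, Real.sq_sqrt (hρpos y).le])
    rw [ea, eb] at key
    have eM : Real.sqrt (M ^ 2 * ∫ y : ℝ, ‖G y‖ ^ 2 / ρ₀ y)
        = M * Real.sqrt (∫ y : ℝ, ‖G y‖ ^ 2 / ρ₀ y) := by
      rw [Real.sqrt_mul (sq_nonneg M), Real.sqrt_sq hM0]
    rw [eM] at key
    refine key.trans ?_
    have hs : Real.sqrt (∫ y : ℝ, ρ₀ y * u y t ^ 2) ≤ Real.sqrt (2 * E₀) :=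
      Real.sqrt_le_sqrt (huE t ht)
    exact mul_le_mul_of_nonneg_right hs
      (mul_nonneg hM0 (Real.sqrt_nonneg _))
  -- Term B : Cauchy–Schwarz for  ∫ ⟪∂_y ω, F⟫
  have hB : (∫ y : ℝ, ⟪pdyV ω y t, F y t⟫_ℝ)
      ≤ Real.sqrt (∫ y : ℝ, ‖pdyV ω y t‖ ^ 2 / J y t)
        * Real.sqrt (∫ y : ℝ, J y t * ‖F y t‖ ^ 2) := by
    have key := cs_main (fun y => ‖pdyV ω y t‖ / Real.sqrt (J y t))
      (fun y => Real.sqrt (J y t) * ‖F y t‖)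
      (fun y => ⟪pdyV ω y t, F y t⟫_ℝ)
      ((hmω.norm.div hcsJ.measurable).aestronglyMeasurable)
      ((hcsJ.measurable.mul hmF.norm).aestronglyMeasurable)
      ((hmω.inner hmF).aestronglyMeasurable)
      (hint4.congr (ae_of_all _ fun y => by
        simp [div_pow, Real.sq_sqrt (hJpos y t ht).le]))
      (hint1.congr (ae_of_all _ fun y => by
        simp [mul_pow, Real.sq_sqrt (hJpos y t ht).le]))
      (fun y => by
        have h1 : |⟪pdyV ω y t, F y t⟫_ℝ| ≤ ‖pdyV ω y t‖ * ‖F y t‖ :=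
          abs_real_inner_le_norm _ _
        have e : |‖pdyV ω y t‖ / Real.sqrt (J y t)| * |Real.sqrt (J y t) * ‖F y t‖|
            = ‖pdyV ω y t‖ * ‖F y t‖ := by
          rw [abs_of_nonneg (div_nonneg (norm_nonneg _) (Real.sqrt_nonneg _)),
            abs_of_nonneg (mul_nonneg (Real.sqrt_nonneg _) (norm_nonneg _))]
          field_simp [(Real.sqrt_pos.2 (hJpos y t ht)).ne']
        rw [e]
        exact h1)
    have ea : (∫ y : ℝ, (‖pdyV ω y t‖ / Real.sqrt (J y t)) ^ 2)
        = ∫ y : ℝ, ‖pdyV ω y t‖ ^ 2 / J y t :=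
      integral_congr_ae (ae_of_all _ fun y => by
        simp [div_pow, Real.sq_sqrt (hJpos y t ht).le])
    have eb : (∫ y : ℝ, (Real.sqrt (J y t) * ‖F y t‖) ^ 2)
        = ∫ y : ℝ, J y t * ‖F y t‖ ^ 2 :=
      integral_congr_ae (ae_of_all _ fun y => by
        simp [mul_pow, Real.sq_sqrt (hJpos y t ht).le])
    rw [ea, eb] at key
    exact key
  rw [hderiv.deriv, hibp]
  have hc : (0:ℝ) ≤ 1 / (2 * π) := by positivity
  calc 2 * (∫ y : ℝ, u y t * ⟪F y t, G y⟫_ℝ)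
        + (1 / (2 * π)) * ∫ y : ℝ, ⟪pdyV ω y t, F y t⟫_ℝ
      ≤ 2 * (Real.sqrt (2 * E₀) * (M * Real.sqrt (∫ y : ℝ, ‖G y‖ ^ 2 / ρ₀ y)))
        + (1 / (2 * π)) * (Real.sqrt (∫ y : ℝ, ‖pdyV ω y t‖ ^ 2 / J y t)
            * Real.sqrt (∫ y : ℝ, J y t * ‖F y t‖ ^ 2)) := by
        exact add_le_add (mul_le_mul_of_nonneg_left hA (by norm_num))
          (mul_le_mul_of_nonneg_left hB hc)
    _ = _ := by ring
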